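/- Let n ≥ 1 and let a : ℕ → ℕ be periodic with period 2n (i.e., a(j + 2n) = a(j) for all j) with period sum ∑_{k=0}^{2n−1} a(k) ≤ n − 1. Define B(j) = ∑_{k=0}^{j−1} a(k) and C(j) = 2·B(j) − j as an integer. Suppose j* < 2n is the largest maximizer of C within the first period, i.e., C(j) ≤ C(j*) for all j < 2n, and C(j) < C(j*) for all j with j* < j < 2n. Then C(j) < C(j*) for every j > j*, and consequently for every j > 0, 2 · ∑_{k=0}^{j−1} a(j* + k) < j (i.e., the sequence is rotate-bounded starting at index j*). -/
import Mathlib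


/-- The integer deviation `C(j) = 2·B(j) − j` of the prefix sums `B` of `a`. -/
def devC (a : ℕ → ℕ) (j : ℕ) : ℤ := 2 * (∑ k ∈ Finset.range j, (a k : ℤ)) - j

/-- For a sequence of period `2n` with period sum at most `n - 1`, if `js < 2n` is the
largest maximizer of the deviation `C` within the first period, then `C(j) < C(js)` for
every `j > js`, and consequently the sequence is rotate-bounded starting at index `js`. -/
theorem stmt_8 (n : ℕ) (hn : 1 ≤ n) (a : ℕ → ℕ)
    (hper : ∀ j, a (j + 2 * n) = a j)
    (hsum : ∑ k ∈ Finset.range (2 * n), a k ≤ n - 1)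
    (js : ℕ) (hjs : js < 2 * n)
    (hmax : ∀ j, j < 2 * n → devC a j ≤ devC a js)
    (hstrict : ∀ j, js < j → j < 2 * n → devC a j < devC a js) :
    (∀ j, js < j → devC a j < devC a js) ∧
      (∀ j, 0 < j → 2 * ∑ k ∈ Finset.range j, a (js + k) < j) := by
  -- the shifted window sum over a full period is constant
  obtain ⟨m, hm⟩ : ∃ m, 2 * n = m + 1 := ⟨2 * n - 1, by omega⟩
  have hwin : ∀ j, ∑ i ∈ Finset.range (2 * n), a (j + i) =
      ∑ k ∈ Finset.range (2 * n), a k := by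
    intro j
    induction j with
    | zero => simp
    | succ j ih =>
      rw [← ih]
      rw [hm, Finset.sum_range_succ, Finset.sum_range_succ']
      have : j + 1 + m = j + 2 * n := by omega
      rw [this, hper j]
      have : ∀ i, j + 1 + i = j + (i + 1) := by intro i; omega
      simp only [this]
      ring
  have hScast : (∑ k ∈ Finset.range (2 * n), (a k : ℤ)) ≤ (n : ℤ) - 1 := by
    have h := hsum
    zify [hn] at h
    exact h
  have hstep : ∀ j, devC a (j + 2 * n) ≤ devC a j - 2 := by
    intro j
    unfold devC
    rw [Finset.sum_range_add]
    have : (∑ i ∈ Finset.range (2 * n), (a (j + i) : ℤ)) =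
        ∑ k ∈ Finset.range (2 * n), (a k : ℤ) := by
      rw [← Nat.cast_sum, ← Nat.cast_sum, hwin j]
    rw [this]
    have hn' : (1 : ℤ) ≤ (n : ℤ) := by exact_mod_cast hn
    push_cast
    linarith [hScast]
  have hiter : ∀ q r, devC a (r + q * (2 * n)) ≤ devC a r - 2 * q := by
    intro q
    induction q with
    | zero => intro r; simp
    | succ q ih =>
      intro r
      have h1 : r + (q + 1) * (2 * n) = (r + q * (2 * n)) + 2 * n := by ring
      rw [h1]
      have ha := hstep (r + q * (2 * n))
      have hb := ih r
      push_cast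
      linarith
  have part1 : ∀ j, js < j → devC a j < devC a js := by
    intro j hj
    have hj2 : j = j % (2 * n) + (j / (2 * n)) * (2 * n) := by
      rw [Nat.mod_add_div']
    set q := j / (2 * n) with hq
    set r := j % (2 * n) with hr
    have hrlt : r < 2 * n := Nat.mod_lt _ (by omega)
    rcases Nat.eq_zero_or_pos q with h0 | hpos
    · have : j = r := by rw [h0, Nat.zero_mul, Nat.add_zero] at hj2; exact hj2
      exact hstrict j hj (this ▸ hrlt)
    · have h1 := hiter q r
      rw [← hj2] at h1
      have h2 := hmax r hrlt
      have h3 : (1 : ℤ) ≤ (q : ℤ) := by exact_mod_cast hpos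
      linarith
  refine ⟨part1, ?_⟩
  intro j hj
  have h1 := part1 (js + j) (by omega)
  unfold devC at h1
  rw [Finset.sum_range_add] at h1
  have h2 : (2:ℤ) * ∑ k ∈ Finset.range j, (a (js + k) : ℤ) < j := by
    push_cast at h1 ⊢
    omega
  have h3 : ((2 * ∑ k ∈ Finset.range j, a (js + k) : ℕ) : ℤ) < (j : ℤ) := by
    push_cast
    exact h2
  exact_mod_cast h3
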